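/- Let u be a real C² function on a domain V ⊆ ℂ with u ≤ 0 and Δu ≥ A·u for some constant A > 0. Then either u ≡ 0 on V or u < 0 everywhere on V. -/

import Mathlib

open Filter Topology Set Metric

/-- The Euclidean Laplacian of a function `u : ℂ → ℝ`:
`Δu = ∂²u/∂x² + ∂²u/∂y²`. -/
noncomputable def laplacian (u : ℂ → ℝ) (z : ℂ) : ℝ :=
  fderiv ℝ (fun w => fderiv ℝ u w 1) z 1 +
    fderiv ℝ (fun w => fderiv ℝ u w Complex.I) z Complex.I

section Helpers

lemma sep_hasFDerivAt {p q p' q' : ℝ → ℝ} (hp : ∀ x, HasDerivAt p (p' x) x)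
    (hq : ∀ x, HasDerivAt q (q' x) x) (w : ℂ) :
    HasFDerivAt (fun z : ℂ => p z.re * q z.im)
      (p w.re • (q' w.im • Complex.imCLM) + q w.im • (p' w.re • Complex.reCLM)) w := by
  have h1 : HasFDerivAt (fun z : ℂ => p z.re) (p' w.re • Complex.reCLM) w :=
    (hp w.re).comp_hasFDerivAt w Complex.reCLM.hasFDerivAt
  have h2 : HasFDerivAt (fun z : ℂ => q z.im) (q' w.im • Complex.imCLM) w :=
    (hq w.im).comp_hasFDerivAt w Complex.imCLM.hasFDerivAt
  exact h1.mul h2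

lemma sep_fderiv_one {p q p' q' : ℝ → ℝ} (hp : ∀ x, HasDerivAt p (p' x) x)
    (hq : ∀ x, HasDerivAt q (q' x) x) (w : ℂ) :
    fderiv ℝ (fun z : ℂ => p z.re * q z.im) w 1 = p' w.re * q w.im := by
  rw [(sep_hasFDerivAt hp hq w).fderiv]
  simp [Complex.reCLM_apply, Complex.imCLM_apply]
  ring

lemma sep_fderiv_I {p q p' q' : ℝ → ℝ} (hp : ∀ x, HasDerivAt p (p' x) x)
    (hq : ∀ x, HasDerivAt q (q' x) x) (w : ℂ) :
    fderiv ℝ (fun z : ℂ => p z.re * q z.im) w Complex.I = p w.re * q' w.im := by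
  rw [(sep_hasFDerivAt hp hq w).fderiv]
  simp [Complex.reCLM_apply, Complex.imCLM_apply]

lemma sep_laplacian {p q p' q' p'' q'' : ℝ → ℝ}
    (hp : ∀ x, HasDerivAt p (p' x) x) (hq : ∀ x, HasDerivAt q (q' x) x)
    (hp' : ∀ x, HasDerivAt p' (p'' x) x) (hq' : ∀ x, HasDerivAt q' (q'' x) x) (w : ℂ) :
    laplacian (fun z : ℂ => p z.re * q z.im) w = p'' w.re * q w.im + p w.re * q'' w.im := by
  unfold laplacian
  have e1 : (fun w : ℂ => fderiv ℝ (fun z : ℂ => p z.re * q z.im) w 1)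
      = fun w : ℂ => p' w.re * q w.im := funext fun w => sep_fderiv_one hp hq w
  have e2 : (fun w : ℂ => fderiv ℝ (fun z : ℂ => p z.re * q z.im) w Complex.I)
      = fun w : ℂ => p w.re * q' w.im := funext fun w => sep_fderiv_I hp hq w
  rw [e1, e2, sep_fderiv_one hp' hq w, sep_fderiv_I hp hq' w]

lemma gauss_hasDerivAt (α a : ℝ) (x : ℝ) :
    HasDerivAt (fun x : ℝ => Real.exp (-(α * (x - a) ^ 2)))
      (-(2 * α * (x - a)) * Real.exp (-(α * (x - a) ^ 2))) x := by
  have h1 : HasDerivAt (fun x : ℝ => -(α * (x - a) ^ 2)) (-(2 * α * (x - a))) x := by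
    have := ((((hasDerivAt_id x).sub_const a).pow 2).const_mul α).neg
    refine HasDerivAt.congr_deriv this ?_
    simp
    ring
  simpa [mul_comm] using h1.exp

lemma gauss_deriv2 (α a : ℝ) (x : ℝ) :
    HasDerivAt (fun x : ℝ => -(2 * α * (x - a)) * Real.exp (-(α * (x - a) ^ 2)))
      ((4 * α ^ 2 * (x - a) ^ 2 - 2 * α) * Real.exp (-(α * (x - a) ^ 2))) x := by
  have h1 : HasDerivAt (fun x : ℝ => -(2 * α * (x - a))) (-(2 * α)) x := by
    have := (((hasDerivAt_id x).sub_const a).const_mul (2 * α)).neg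
    simpa [Pi.neg_def] using this
  have := h1.mul (gauss_hasDerivAt α a x)
  refine HasDerivAt.congr_deriv this ?_
  ring

lemma second_dir_deriv_nonpos {v : ℂ → ℝ} {U : Set ℂ} (hU : IsOpen U) {z : ℂ} (hz : z ∈ U)
    (hv : ContDiffOn ℝ 2 v U) (hmax : IsLocalMax v z) (e : ℂ) :
    fderiv ℝ (fun w => fderiv ℝ v w e) z e ≤ 0 := by
  by_contra hc
  push_neg at hc
  set c : ℝ := fderiv ℝ (fun w => fderiv ℝ v w e) z e with hcdef
  set ℓ : ℝ → ℂ := fun t => z + t • e with hℓdef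
  have hℓd : ∀ t : ℝ, HasDerivAt ℓ e t := fun t => by
    simpa [hℓdef] using ((hasDerivAt_id t).smul_const e).const_add z
  have hℓcont : Continuous ℓ := by fun_prop
  have hvd : ∀ w ∈ U, DifferentiableAt ℝ v w := fun w hw =>
    (hv.contDiffAt (hU.mem_nhds hw)).differentiableAt two_ne_zero
  set F : ℂ → ℝ := fun w => fderiv ℝ v w e with hFdef
  set G : ℝ → ℝ := fun t => F (ℓ t) with hGdef
  set g : ℝ → ℝ := fun t => v (ℓ t) with hgdef
  have hgd : ∀ t : ℝ, ℓ t ∈ U → HasDerivAt g (G t) t := fun t ht =>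
    (hvd _ ht).hasFDerivAt.comp_hasDerivAt t (hℓd t)
  have hF2 : ContDiffAt ℝ 2 v z := hv.contDiffAt (hU.mem_nhds hz)
  have hF1 : ContDiffAt ℝ 1 (fderiv ℝ v) z := hF2.fderiv_right (by norm_num)
  have hFdiff : DifferentiableAt ℝ F z := by
    have h1 : DifferentiableAt ℝ (fderiv ℝ v) z := hF1.differentiableAt one_ne_zero
    exact (ContinuousLinearMap.apply ℝ ℝ e).differentiableAt.comp z h1
  have hG0 : HasDerivAt G c 0 := by
    have h0 : ℓ 0 = z := by simp [hℓdef]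
    have hFAt : HasFDerivAt F (fderiv ℝ F z) (ℓ 0) := h0 ▸ hFdiff.hasFDerivAt
    exact hFAt.comp_hasDerivAt 0 (hℓd 0)
  have hgrad : fderiv ℝ v z = 0 := hmax.fderiv_eq_zero
  have hG0val : G 0 = 0 := by simp [hGdef, hFdef, hℓdef, hgrad]
  have hslope : Tendsto (slope G 0) (𝓝[≠] 0) (𝓝 c) := hasDerivAt_iff_tendsto_slope.mp hG0
  have hev : ∀ᶠ t in 𝓝[≠] (0:ℝ), 0 < slope G 0 t :=
    hslope.eventually (eventually_gt_nhds hc)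
  rw [eventually_nhdsWithin_iff] at hev
  obtain ⟨δ₁, hδ₁pos, hδ₁⟩ := Metric.eventually_nhds_iff.mp hev
  have hpre : IsOpen (ℓ ⁻¹' U) := hU.preimage hℓcont
  have h0pre : (0:ℝ) ∈ ℓ ⁻¹' U := by simp [hℓdef, hz]
  obtain ⟨δ₂, hδ₂pos, hδ₂⟩ := Metric.isOpen_iff.mp hpre 0 h0pre
  have hmax' : ∀ᶠ t in 𝓝 (0:ℝ), v (ℓ t) ≤ v z := by
    have h0 : ℓ 0 = z := by simp [hℓdef]
    have hca : ContinuousAt ℓ 0 := hℓcont.continuousAt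
    rw [ContinuousAt, h0] at hca
    exact hca.eventually hmax
  obtain ⟨δ₃, hδ₃pos, hδ₃⟩ := Metric.eventually_nhds_iff.mp hmax'
  set δ : ℝ := min δ₁ (min δ₂ δ₃) with hδdef
  have hδpos : 0 < δ := lt_min hδ₁pos (lt_min hδ₂pos hδ₃pos)
  have hmono : StrictMonoOn g (Icc 0 (δ/2)) := by
    apply strictMonoOn_of_deriv_pos (convex_Icc _ _)
    · intro t ht
      have : ℓ t ∈ U := hδ₂ (by
        simp only [Metric.mem_ball, Real.dist_eq, sub_zero]
        rw [abs_of_nonneg ht.1]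
        calc t ≤ δ/2 := ht.2
        _ < δ := by linarith
        _ ≤ δ₂ := le_trans (min_le_right _ _) (min_le_left _ _))
      exact ((hgd t this).differentiableAt).continuousAt.continuousWithinAt
    · intro t ht
      rw [interior_Icc] at ht
      have htU : ℓ t ∈ U := hδ₂ (by
        simp only [Metric.mem_ball, Real.dist_eq, sub_zero]
        rw [abs_of_pos ht.1]
        calc t < δ/2 := ht.2
        _ < δ := by linarith
        _ ≤ δ₂ := le_trans (min_le_right _ _) (min_le_left _ _))
      rw [(hgd t htU).deriv]
      have : 0 < slope G 0 t := hδ₁ (by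
        simp only [Real.dist_eq, sub_zero]
        rw [abs_of_pos ht.1]
        calc t < δ/2 := ht.2
        _ < δ := by linarith
        _ ≤ δ₁ := min_le_left _ _) (ne_of_gt ht.1)
      rw [slope_def_field] at this
      have h2 : G t / t > 0 := by simpa [hG0val] using this
      have := mul_pos h2 ht.1
      rwa [div_mul_cancel₀] at this
      exact ne_of_gt ht.1
  have h1 : g 0 < g (δ/2) :=
    hmono ⟨le_rfl, by positivity⟩ ⟨by positivity, le_rfl⟩ (by positivity)
  have h2 : g (δ/2) ≤ g 0 := by
    have : v (ℓ (δ/2)) ≤ v z := hδ₃ (by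
      simp only [Real.dist_eq, sub_zero]
      rw [abs_of_pos (by positivity)]
      calc δ/2 < δ := by linarith
      _ ≤ δ₃ := le_trans (min_le_right _ _) (min_le_right _ _))
    simpa [hgdef, hℓdef] using this
  linarith

lemma laplacian_nonpos_of_isLocalMax {v : ℂ → ℝ} {U : Set ℂ} (hU : IsOpen U) {z : ℂ}
    (hz : z ∈ U) (hv : ContDiffOn ℝ 2 v U) (hmax : IsLocalMax v z) : laplacian v z ≤ 0 :=
  add_nonpos (second_dir_deriv_nonpos hU hz hv hmax 1)
    (second_dir_deriv_nonpos hU hz hv hmax Complex.I)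

lemma dir_diff {v : ℂ → ℝ} {z : ℂ} (hv : ContDiffAt ℝ 2 v z) (e : ℂ) :
    DifferentiableAt ℝ (fun w => fderiv ℝ v w e) z := by
  have h1 : ContDiffAt ℝ 1 (fderiv ℝ v) z := hv.fderiv_right (by norm_num)
  exact (ContinuousLinearMap.apply ℝ ℝ e).differentiableAt.comp z (h1.differentiableAt one_ne_zero)

lemma laplacian_add {u h : ℂ → ℝ} {U : Set ℂ} (hU : IsOpen U) {z : ℂ} (hz : z ∈ U)
    (hu : ContDiffOn ℝ 2 u U) (hh : ContDiff ℝ 2 h) :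
    laplacian (fun w => u w + h w) z = laplacian u z + laplacian h z := by
  have hud : ∀ w ∈ U, DifferentiableAt ℝ u w := fun w hw =>
    (hu.contDiffAt (hU.mem_nhds hw)).differentiableAt two_ne_zero
  have hhd : ∀ w : ℂ, DifferentiableAt ℝ h w := fun w =>
    (hh.contDiffAt).differentiableAt two_ne_zero
  have key : ∀ e : ℂ, fderiv ℝ (fun w => fderiv ℝ (fun w' => u w' + h w') w e) z e
      = fderiv ℝ (fun w => fderiv ℝ u w e) z e + fderiv ℝ (fun w => fderiv ℝ h w e) z e := by
    intro e
    have inner_eq : (fun w => fderiv ℝ (fun w' => u w' + h w') w e)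
        =ᶠ[𝓝 z] fun w => fderiv ℝ u w e + fderiv ℝ h w e := by
      filter_upwards [hU.mem_nhds hz] with w hw
      rw [fderiv_fun_add (hud w hw) (hhd w)]
      simp
    rw [inner_eq.fderiv_eq, fderiv_fun_add (dir_diff (hu.contDiffAt (hU.mem_nhds hz)) e)
      (dir_diff hh.contDiffAt e)]
    simp
  unfold laplacian
  rw [key 1, key Complex.I]
  ring

lemma laplacian_smul_sub_const {h : ℂ → ℝ} (hh : ContDiff ℝ 2 h) (ε C : ℝ) (z : ℂ) :
    laplacian (fun w => ε * (h w - C)) z = ε * laplacian h z := by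
  have hhd : ∀ w : ℂ, DifferentiableAt ℝ h w := fun w =>
    (hh.contDiffAt).differentiableAt two_ne_zero
  have key : ∀ e : ℂ, fderiv ℝ (fun w => fderiv ℝ (fun w' => ε * (h w' - C)) w e) z e
      = ε * fderiv ℝ (fun w => fderiv ℝ h w e) z e := by
    intro e
    have inner_eq : (fun w => fderiv ℝ (fun w' => ε * (h w' - C)) w e)
        = fun w => ε * fderiv ℝ h w e := by
      funext w
      rw [fderiv_const_mul ((hhd w).sub_const C) ε, fderiv_sub_const]
      simp
    rw [inner_eq, fderiv_const_mul (dir_diff hh.contDiffAt e) ε]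
    simp
  unfold laplacian
  rw [key 1, key Complex.I]
  ring

lemma gauss_contDiff (α a : ℝ) : ContDiff ℝ 2 (fun x : ℝ => Real.exp (-(α * (x - a) ^ 2))) :=
  Real.contDiff_exp.comp ((contDiff_const.mul ((contDiff_id.sub contDiff_const).pow 2)).neg)

end Helpers

set_option maxHeartbeats 1600000 in
/-- Minda's strong maximum principle: if `u ≤ 0` is C² on a domain `V ⊆ ℂ` and
satisfies `Δu ≥ A·u` for a constant `A > 0`, then either `u ≡ 0` on `V` or `u < 0`
everywhere on `V`. -/
theorem minda_dichotomy (V : Set ℂ) (hV : IsOpen V) (hVconn : IsConnected V)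
    (u : ℂ → ℝ) (hu : ContDiffOn ℝ 2 u V)
    (hle : ∀ z ∈ V, u z ≤ 0)
    (A : ℝ) (hA : 0 < A)
    (hineq : ∀ z ∈ V, A * u z ≤ laplacian u z) :
    (∀ z ∈ V, u z = 0) ∨ (∀ z ∈ V, u z < 0) := by
  have hcont : ContinuousOn u V := hu.continuousOn
  -- Main step: the zero set is open.
  have main : ∀ zs ∈ V, u zs = 0 → ∃ R > 0, ∀ z1 ∈ ball zs R, u z1 = 0 := by
    intro zs hzs hzs0
    obtain ⟨r, hrpos, hrV⟩ := Metric.isOpen_iff.mp hV zs hzs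
    refine ⟨r/3, by positivity, ?_⟩
    intro z1 hz1
    by_contra hz10
    set R : ℝ := r/3 with hRdef
    have hball2R : closedBall zs (2*R) ⊆ V := fun w hw => hrV (by
      simp only [Metric.mem_closedBall] at hw
      simp only [Metric.mem_ball]
      linarith)
    have hz1V : z1 ∈ V := hball2R (by
      simp only [Metric.mem_closedBall]
      have := (Metric.mem_ball.mp hz1).le
      linarith)
    have hz1neg : u z1 < 0 := lt_of_le_of_ne (hle z1 hz1V) hz10
    -- the compact zero set near zs
    set K : Set ℂ := closedBall zs (2*R) ∩ u ⁻¹' {0} with hKdef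
    have hKclosed : IsClosed K := (hcont.mono hball2R).preimage_isClosed_of_isClosed
      isClosed_closedBall isClosed_singleton
    have hKcomp : IsCompact K := (isCompact_closedBall zs (2*R)).of_isClosed_subset
      hKclosed inter_subset_left
    have hKne : K.Nonempty := ⟨zs, by
      simp only [hKdef, mem_inter_iff, Metric.mem_closedBall, dist_self, mem_preimage,
        mem_singleton_iff]
      exact ⟨by positivity, hzs0⟩⟩
    obtain ⟨p, hpK, hpd⟩ := hKcomp.exists_infDist_eq_dist hKne z1
    set d : ℝ := dist z1 p with hddef
    have hdpos : 0 < d := by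
      rw [hddef, dist_pos]
      intro h
      apply hz10
      rw [h]
      exact hpK.2
    have hdR : d < R := by
      have h1 : Metric.infDist z1 K ≤ dist z1 zs := Metric.infDist_le_dist_of_mem ⟨by
        simp only [Metric.mem_closedBall, dist_self]; positivity, hzs0⟩
      rw [hpd] at h1
      calc d ≤ dist z1 zs := h1
      _ < R := Metric.mem_ball.mp hz1
    have hd0 : d ≠ 0 := ne_of_gt hdpos
    clear_value d
    -- u < 0 on ball z1 d
    have hneg : ∀ w : ℂ, dist w z1 < d → u w < 0 := by
      intro w hw
      have hwV : w ∈ V := hball2R (by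
        simp only [Metric.mem_closedBall]
        have h1 : dist w zs ≤ dist w z1 + dist z1 zs := dist_triangle _ _ _
        have h2 : dist z1 zs < R := Metric.mem_ball.mp hz1
        linarith)
      rcases lt_or_eq_of_le (hle w hwV) with h | h
      · exact h
      · exfalso
        have hwK : w ∈ K := ⟨by
          simp only [Metric.mem_closedBall]
          have h1 : dist w zs ≤ dist w z1 + dist z1 zs := dist_triangle _ _ _
          have h2 : dist z1 zs < R := Metric.mem_ball.mp hz1
          linarith, by simpa using h⟩
        have h3 : Metric.infDist z1 K ≤ dist z1 w := Metric.infDist_le_dist_of_mem hwK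
        rw [hpd] at h3
        rw [dist_comm] at hw
        linarith
    -- the tangent ball center
    set c : ℂ := (z1 + p) / 2 with hcdef
    have hcz1 : dist c z1 = d / 2 := by
      have h1 : c - z1 = (p - z1) / 2 := by rw [hcdef]; ring
      rw [Complex.dist_eq, h1, norm_div, Complex.norm_two, ← Complex.dist_eq, dist_comm,
        ← hddef]
    have hcp : dist c p = d / 2 := by
      have h1 : c - p = (z1 - p) / 2 := by rw [hcdef]; ring
      rw [Complex.dist_eq, h1, norm_div, Complex.norm_two, ← Complex.dist_eq, ← hddef]
    clear_value c
    -- points near c are in the negativity ball and in V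
    have hcV : ∀ w : ℂ, dist w c ≤ d/2 → dist w z1 ≤ d := by
      intro w hw
      calc dist w z1 ≤ dist w c + dist c z1 := dist_triangle _ _ _
      _ ≤ d/2 + d/2 := by rw [hcz1]; linarith
      _ = d := by ring
    have hcVmem : ∀ w : ℂ, dist w c ≤ d/2 → w ∈ V := by
      intro w hw
      apply hball2R
      simp only [Metric.mem_closedBall]
      have h1 : dist w zs ≤ dist w z1 + dist z1 zs := dist_triangle _ _ _
      have h2 : dist z1 zs < R := Metric.mem_ball.mp hz1
      have h3 := hcV w hw
      linarith
    have hcneg : ∀ w : ℂ, dist w c < d/2 → u w < 0 := by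
      intro w hw
      apply hneg
      calc dist w z1 ≤ dist w c + dist c z1 := dist_triangle _ _ _
      _ < d/2 + d/2 := by rw [hcz1]; linarith
      _ = d := by ring
    -- barrier parameters
    set a : ℝ := c.re with hadef
    set b : ℝ := c.im with hbdef
    clear_value a b
    have keydist : ∀ w : ℂ, (w.re - a)^2 + (w.im - b)^2 = dist w c ^ 2 := by
      intro w
      rw [hadef, hbdef, Complex.dist_eq, Complex.sq_norm, Complex.normSq_apply, Complex.sub_re,
        Complex.sub_im]
      ring
    set α : ℝ := (17 + 4*A*d^2) / d^2 with hαdef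
    have hαpos : 0 < α := by
      rw [hαdef]
      have : (0:ℝ) < d^2 := by positivity
      have : (0:ℝ) < 17 + 4*A*d^2 := by nlinarith
      positivity
    have hαd : α * d^2 = 17 + 4*A*d^2 := by
      rw [hαdef]; field_simp
    clear_value α
    have hαkey : ∀ ρ : ℝ, d/4 ≤ ρ → A ≤ 4*α^2*ρ^2 - 4*α := by
      intro ρ hρ
      have hρsq : (d/4)^2 ≤ ρ^2 := pow_le_pow_left₀ (by linarith) hρ 2
      have e1 : 4*α^2*(d/4)^2 ≤ 4*α^2*ρ^2 :=
        mul_le_mul_of_nonneg_left hρsq (by positivity)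
      have e5 : A*(α*d^2) = A*(17+4*A*d^2) := by rw [hαd]
      have e4 : A ≤ α^2*d^2/4 - 4*α := by
        nlinarith [e5, hαpos.le, hA.le, sq_nonneg d,
          mul_nonneg (mul_nonneg hA.le hA.le) (sq_nonneg d)]
      have e6 : 4*α^2*(d/4)^2 = α^2*d^2/4 := by ring
      linarith
    -- the barrier pieces
    set P : ℝ → ℝ := fun x => Real.exp (-(α * (x - a) ^ 2)) with hPdef
    set P' : ℝ → ℝ := fun x => -(2 * α * (x - a)) * Real.exp (-(α * (x - a) ^ 2)) with hP'def
    set Q : ℝ → ℝ := fun y => Real.exp (-(α * (y - b) ^ 2)) with hQdef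
    set Q' : ℝ → ℝ := fun y => -(2 * α * (y - b)) * Real.exp (-(α * (y - b) ^ 2)) with hQ'def
    have hP : ∀ x, HasDerivAt P (P' x) x := gauss_hasDerivAt α a
    have hQ : ∀ y, HasDerivAt Q (Q' y) y := gauss_hasDerivAt α b
    have hP' : ∀ x, HasDerivAt P' ((4 * α ^ 2 * (x - a) ^ 2 - 2 * α) * P x) x :=
      gauss_deriv2 α a
    have hQ' : ∀ y, HasDerivAt Q' ((4 * α ^ 2 * (y - b) ^ 2 - 2 * α) * Q y) y :=
      gauss_deriv2 α b
    set H : ℂ → ℝ := fun z : ℂ => P z.re * Q z.im with hHdef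
    have hHpos : ∀ w : ℂ, 0 < H w := fun w => mul_pos (Real.exp_pos _) (Real.exp_pos _)
    have hHval : ∀ w : ℂ, H w = Real.exp (-(α * dist w c ^ 2)) := by
      intro w
      rw [hHdef]
      simp only [hPdef, hQdef]
      rw [← Real.exp_add, ← keydist w]
      congr 1
      ring
    have hHC2 : ContDiff ℝ 2 H := by
      apply ContDiff.mul
      · exact (gauss_contDiff α a).comp (Complex.reCLM.contDiff)
      · exact (gauss_contDiff α b).comp (Complex.imCLM.contDiff)
    have hHlap : ∀ w : ℂ, laplacian H w = (4*α^2 * dist w c ^2 - 4*α) * H w := by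
      intro w
      rw [hHdef, sep_laplacian hP hQ hP' hQ' w]
      simp only [hPdef, hQdef]
      linear_combination (4*α^2 * (Real.exp (-(α * (w.re - a)^2)) *
        Real.exp (-(α * (w.im - b)^2)))) * (keydist w)
    set C : ℝ := Real.exp (-(α * (d/2)^2)) with hCdef
    have hCpos : 0 < C := by rw [hCdef]; exact Real.exp_pos _
    clear_value C
    -- max of u on inner sphere
    have hSsub : Metric.sphere c (d/4) ⊆ V := fun w hw =>
      hcVmem w (by rw [mem_sphere_iff_norm] at hw; rw [dist_eq_norm, hw]; linarith)
    have hSne : (Metric.sphere c (d/4)).Nonempty :=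
      NormedSpace.sphere_nonempty.mpr (by linarith)
    obtain ⟨w₀, hw₀S, hw₀max⟩ := (isCompact_sphere c (d/4)).exists_isMaxOn hSne
      (hcont.mono hSsub)
    set m : ℝ := u w₀ with hmdef
    have hmneg : m < 0 := hcneg w₀ (by
      rw [mem_sphere_iff_norm] at hw₀S
      rw [dist_eq_norm, hw₀S]; linarith)
    set ε : ℝ := (-m) * Real.exp (α * (d/4)^2) with hεdef
    have hεpos : 0 < ε := by
      rw [hεdef]
      exact mul_pos (by linarith) (Real.exp_pos _)
    clear_value ε
    have hεsphere : ∀ w : ℂ, dist w c = d/4 → ε * H w = -m := by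
      intro w hw
      rw [hHval w, hw, hεdef, mul_assoc, ← Real.exp_add]
      simp
    -- the comparison function
    set B : ℂ → ℝ := fun w => ε * (H w - C) with hBdef
    set v : ℂ → ℝ := fun w => u w + B w with hvdef
    have hBC2 : ContDiff ℝ 2 B := (contDiff_const.mul (hHC2.sub contDiff_const))
    have hvC2 : ContDiffOn ℝ 2 v V := hu.add hBC2.contDiffOn
    have hvcont : ContinuousOn v V := hvC2.continuousOn
    have hvlap : ∀ w ∈ V, laplacian v w = laplacian u w + ε * laplacian H w := by
      intro w hw
      rw [hvdef]
      rw [laplacian_add hV hw hu hBC2, hBdef, laplacian_smul_sub_const hHC2]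
    -- outer sphere values
    have houter : ∀ w : ℂ, dist w c = d/2 → B w = 0 := by
      intro w hw
      rw [hBdef]
      simp only [hHval w, hw, hCdef, sub_self, mul_zero]
    -- the annulus
    set Ann : Set ℂ := closedBall c (d/2) \ ball c (d/4) with hAnnDef
    have hAnnV : Ann ⊆ V := fun w hw => hcVmem w (Metric.mem_closedBall.mp hw.1)
    have hAnnComp : IsCompact Ann := (isCompact_closedBall c (d/2)).diff isOpen_ball
    have hAnnNe : Ann.Nonempty := ⟨p, by
      constructor
      · simp only [Metric.mem_closedBall]
        rw [dist_comm]; rw [hcp]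
      · simp only [Metric.mem_ball, not_lt]
        rw [dist_comm, hcp]; linarith⟩
    obtain ⟨q, hqAnn, hqmax⟩ := hAnnComp.exists_isMaxOn hAnnNe (hvcont.mono hAnnV)
    -- v ≤ 0 at the max point
    have hvq : v q ≤ 0 := by
      by_contra hq
      push_neg at hq
      have hqV : q ∈ V := hAnnV hqAnn
      have hq1 : dist q c ≤ d/2 := Metric.mem_closedBall.mp hqAnn.1
      have hq2 : d/4 ≤ dist q c := not_lt.mp (fun h => hqAnn.2 (Metric.mem_ball.mp h))
      have hqouter : dist q c ≠ d/2 := by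
        intro h
        have := houter q h
        have : v q = u q := by rw [hvdef]; simp [this]
        rw [this] at hq
        exact absurd (hle q hqV) (not_le.mpr hq)
      have hqinner : dist q c ≠ d/4 := by
        intro h
        have h1 : ε * H q = -m := hεsphere q h
        have h2 : u q ≤ m := hw₀max (by rwa [mem_sphere_iff_norm, ← dist_eq_norm])
        have : v q = u q + (ε * H q - ε * C) := by rw [hvdef, hBdef]; ring
        rw [this, h1] at hq
        nlinarith [mul_pos hεpos hCpos]
      have hq1' : dist q c < d/2 := lt_of_le_of_ne hq1 hqouter
      have hq2' : d/4 < dist q c := lt_of_le_of_ne hq2 (Ne.symm hqinner)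
      -- q is a local max
      have hO : IsOpen (ball c (d/2) \ closedBall c (d/4)) :=
        isOpen_ball.sdiff isClosed_closedBall
      have hqO : q ∈ ball c (d/2) \ closedBall c (d/4) :=
        ⟨Metric.mem_ball.mpr hq1', fun h => absurd (Metric.mem_closedBall.mp h)
          (not_le.mpr hq2')⟩
      have hOAnn : (ball c (d/2) \ closedBall c (d/4)) ⊆ Ann := fun w hw =>
        ⟨Metric.ball_subset_closedBall hw.1, fun h =>
          hw.2 (Metric.ball_subset_closedBall h)⟩
      have hlocmax : IsLocalMax v q := hqmax.isLocalMax
        (mem_nhds_iff.mpr ⟨_, hOAnn, hO, hqO⟩)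
      have hlapnp : laplacian v q ≤ 0 :=
        laplacian_nonpos_of_isLocalMax hV hqV hvC2 hlocmax
      -- lower bound on laplacian
      have h1 : laplacian v q = laplacian u q + ε * laplacian H q := hvlap q hqV
      have h2 : A * u q ≤ laplacian u q := hineq q hqV
      have h3 : laplacian H q = (4*α^2 * dist q c ^2 - 4*α) * H q := hHlap q
      have h4 : A ≤ 4*α^2 * dist q c^2 - 4*α := hαkey (dist q c) hq2
      have h5 : 0 < H q := hHpos q
      have h6 : A * H q ≤ (4*α^2 * dist q c^2 - 4*α) * H q :=
        mul_le_mul_of_nonneg_right h4 h5.le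
      have h7 : A * v q ≤ laplacian v q := by
        rw [h1, h3]
        have heq : A * v q = A * u q + ε * (A * (H q - C)) := by
          simp only [hvdef, hBdef]; ring
        rw [heq]
        have h8 : A * (H q - C) ≤ A * H q := by nlinarith
        have h9 : ε * (A * (H q - C)) ≤ ε * ((4*α^2 * dist q c^2 - 4*α) * H q) :=
          mul_le_mul_of_nonneg_left (le_trans h8 h6) hεpos.le
        linarith
      nlinarith [mul_pos hA hq]
    have hvAnn : ∀ w ∈ Ann, v w ≤ 0 := fun w hw => le_trans (hqmax hw) hvq
    -- the Hopf ray at p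
    have hpV : p ∈ V := hcVmem p (by rw [dist_comm, hcp])
    have hupmax : IsLocalMax u p := by
      have : ∀ᶠ w in 𝓝 p, u w ≤ u p := by
        filter_upwards [hV.mem_nhds hpV] with w hw
        rw [hpK.2]
        exact hle w hw
      exact this
    have hupz : fderiv ℝ u p = 0 := hupmax.fderiv_eq_zero
    set e : ℂ := (2/d : ℝ) • (c - p) with hedef
    have hcpnorm : ‖c - p‖ = d/2 := by rw [← dist_eq_norm]; exact hcp
    -- position along the ray
    have hraypos : ∀ t : ℝ, p + t • e - c = (t * (2/d) - 1) • (c - p) := by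
      intro t
      rw [hedef, smul_smul]
      module
    have hraydist : ∀ t : ℝ, 0 ≤ t → t ≤ d/4 → dist (p + t • e) c = d/2 - t := by
      intro t ht1 ht2
      rw [dist_eq_norm, hraypos t, norm_smul, hcpnorm]
      rw [Real.norm_eq_abs, abs_of_nonpos (by
        have h1 : t * (2/d) ≤ (d/4) * (2/d) :=
          mul_le_mul_of_nonneg_right ht2 (div_nonneg (by norm_num) hdpos.le)
        have h2 : (d/4) * (2/d) = 1/2 := by
          field_simp
          try ring
        rw [h2] at h1
        linarith)]
      field_simp
      ring
    have hrayAnn : ∀ t : ℝ, 0 ≤ t → t ≤ d/4 → (p + t • e) ∈ Ann := by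
      intro t ht1 ht2
      have hd := hraydist t ht1 ht2
      constructor
      · simp only [Metric.mem_closedBall]; rw [hd]; linarith
      · simp only [Metric.mem_ball, not_lt]; rw [hd]; linarith
    -- φ along the ray
    set φ : ℝ → ℝ := fun t => v (p + t • e) with hφdef
    have hφ0 : φ 0 = 0 := by
      have hpc : dist p c = d/2 := by rw [dist_comm]; exact hcp
      simp only [hφdef, zero_smul, add_zero, hvdef]
      rw [hpK.2, houter p hpc]
      ring
    have hφle : ∀ t : ℝ, 0 < t → t ≤ d/4 → φ t ≤ 0 := fun t ht1 ht2 =>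
      hvAnn _ (hrayAnn t ht1.le ht2)
    -- derivative of φ at 0
    have hℓd : ∀ t : ℝ, HasDerivAt (fun s : ℝ => p + s • e) e t := fun t => by
      simpa using ((hasDerivAt_id t).smul_const e).const_add p
    have he_re : e.re = (2/d) * (a - p.re) := by
      rw [hedef, hadef, Complex.smul_re, Complex.sub_re, smul_eq_mul]
    have he_im : e.im = (2/d) * (b - p.im) := by
      rw [hedef, hbdef, Complex.smul_im, Complex.sub_im, smul_eq_mul]
    have hkeyp : (p.re - a)^2 + (p.im - b)^2 = (d/2)^2 := by
      rw [keydist p, dist_comm p c, hcp]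
    have hHp : H p = C := by
      rw [hHval p]
      have : dist p c = d/2 := by rw [dist_comm]; exact hcp
      rw [this, hCdef]
    have hHderiv : HasDerivAt (fun t : ℝ => H (p + t • e)) (α * d * C) 0 := by
      have hval : P p.re * (Q' p.im * e.im) + Q p.im * (P' p.re * e.re) = α * d * C := by
        have hPQC : P p.re * Q p.im = C := hHp
        rw [he_re, he_im]
        have hP'p : P' p.re = -(2*α*(p.re - a)) * P p.re := rfl
        have hQ'p : Q' p.im = -(2*α*(p.im - b)) * Q p.im := rfl
        rw [hP'p, hQ'p, ← hPQC]
        have hdd : d * d⁻¹ = 1 := mul_inv_cancel₀ hd0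
        linear_combination ((4*α/d) * (P p.re * Q p.im)) * hkeyp
          + (P p.re * Q p.im * α * d) * hdd
      have hstep := (sep_hasFDerivAt hP hQ p).comp_hasDerivAt_of_eq 0 (hℓd 0) (by simp)
      have happ : (P p.re • (Q' p.im • Complex.imCLM) +
          Q p.im • (P' p.re • Complex.reCLM)) e = α * d * C := by
        simp only [ContinuousLinearMap.add_apply, ContinuousLinearMap.smul_apply,
          Complex.imCLM_apply, Complex.reCLM_apply, smul_eq_mul]
        linear_combination hval
      rwa [happ] at hstep
    have huderiv : HasDerivAt (fun t : ℝ => u (p + t • e)) 0 0 := by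
      have hud : DifferentiableAt ℝ u p :=
        (hu.contDiffAt (hV.mem_nhds hpV)).differentiableAt two_ne_zero
      have h0 : p + (0:ℝ) • e = p := by simp
      have hF : HasFDerivAt u (0 : ℂ →L[ℝ] ℝ) (p + (0:ℝ) • e) := by
        rw [h0, ← hupz]
        exact hud.hasFDerivAt
      have := hF.comp_hasDerivAt 0 (hℓd 0)
      simpa [Function.comp_def] using this
    have hφderiv : HasDerivAt φ (ε * (α * d * C)) 0 := by
      have := huderiv.add ((hHderiv.sub_const C).const_mul ε)
      simp only [hφdef, hvdef, hBdef]
      simpa [Pi.add_def] using this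
    -- contradiction via the slope
    have hslopeT : Tendsto (slope φ 0) (𝓝[≠] (0:ℝ)) (𝓝 (ε * (α * d * C))) :=
      hasDerivAt_iff_tendsto_slope.mp hφderiv
    have hmonoF : 𝓝[>] (0:ℝ) ≤ 𝓝[≠] (0:ℝ) :=
      nhdsWithin_mono 0 (fun x hx => ne_of_gt hx)
    have hslope' : Tendsto (slope φ 0) (𝓝[>] (0:ℝ)) (𝓝 (ε * (α * d * C))) :=
      hslopeT.mono_left hmonoF
    have hevpos : ∀ᶠ t in 𝓝[>] (0:ℝ), 0 < slope φ 0 t :=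
      hslope'.eventually (eventually_gt_nhds
        (mul_pos hεpos (mul_pos (mul_pos hαpos hdpos) hCpos)))
    have hevle : ∀ᶠ t in 𝓝[>] (0:ℝ), slope φ 0 t ≤ 0 := by
      filter_upwards [Ioc_mem_nhdsGT_of_mem
        (Set.left_mem_Ico.mpr (by linarith : (0:ℝ) < d/4))] with t ht
      rw [slope_def_field]
      apply div_nonpos_of_nonpos_of_nonneg
      · rw [hφ0]
        simpa using hφle t ht.1 ht.2
      · simp only [sub_zero]
        exact ht.1.le
    obtain ⟨t, h1, h2⟩ := (hevpos.and hevle).exists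
    linarith
  -- conclude by connectedness
  by_cases hN : ∃ z ∈ V, u z < 0
  · right
    intro z hz
    by_contra hcon
    have hz0 : u z = 0 := le_antisymm (hle z hz) (not_lt.mp hcon)
    obtain ⟨z1, hz1V, hz1neg⟩ := hN
    have hZopen : IsOpen {w : ℂ | w ∈ V ∧ u w = 0} := by
      rw [Metric.isOpen_iff]
      intro w hw
      obtain ⟨R, hRpos, hball⟩ := main w hw.1 hw.2
      obtain ⟨r, hrpos, hrV⟩ := Metric.isOpen_iff.mp hV w hw.1
      refine ⟨min R r, lt_min hRpos hrpos, ?_⟩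
      intro w' hw'
      have h1 : w' ∈ ball w R := ball_subset_ball (min_le_left _ _) hw'
      have h2 : w' ∈ ball w r := ball_subset_ball (min_le_right _ _) hw'
      exact ⟨hrV h2, hball w' h1⟩
    have hNopen : IsOpen {w : ℂ | w ∈ V ∧ u w < 0} := by
      have : {w : ℂ | w ∈ V ∧ u w < 0} = V ∩ u ⁻¹' (Iio 0) := by
        ext w
        simp [and_comm]
      rw [this]
      exact hcont.isOpen_inter_preimage hV isOpen_Iio
    have hcover : V ⊆ {w : ℂ | w ∈ V ∧ u w = 0} ∪ {w : ℂ | w ∈ V ∧ u w < 0} := by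
      intro w hw
      rcases lt_or_eq_of_le (hle w hw) with h | h
      · exact Or.inr ⟨hw, h⟩
      · exact Or.inl ⟨hw, h⟩
    have hne1 : (V ∩ {w : ℂ | w ∈ V ∧ u w = 0}).Nonempty := ⟨z, hz, hz, hz0⟩
    have hne2 : (V ∩ {w : ℂ | w ∈ V ∧ u w < 0}).Nonempty := ⟨z1, hz1V, hz1V, hz1neg⟩
    obtain ⟨w, _, hw1, hw2⟩ := hVconn.isPreconnected _ _ hZopen hNopen hcover hne1 hne2
    exact absurd hw1.2 (ne_of_lt hw2.2)
  · left
    intro z hz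
    push_neg at hN
    exact le_antisymm (hle z hz) (hN z hz)
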